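/- In a finite strategic form game, if the sum of excess payoffs along every cycle of unilateral deviations is zero (equivalently, the game admits no cycle of strictly improving unilateral deviations), then the game has a pure strategy Nash equilibrium. -/

import Mathlib

/-- A finite strategic form game with no cycle of strictly improving
unilateral deviations has a pure strategy Nash equilibrium. -/
theorem stmt_2 {ι : Type*} [DecidableEq ι] [Fintype ι] {X : ι → Type*}
    [∀ i, Fintype (X i)] [∀ i, Nonempty (X i)]
    (u : ι → (∀ i, X i) → ℝ)
    (hnocycle : ¬ ∃ (k : ℕ) (_ : 0 < k) (x : Fin (k + 1) → ∀ i, X i) (j : Fin k → ι),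
      x (Fin.last k) = x 0 ∧
      (∀ l : Fin k, ∀ m : ι, m ≠ j l → x l.castSucc m = x l.succ m) ∧
      (∀ l : Fin k, u (j l) (x l.castSucc) < u (j l) (x l.succ))) :
    ∃ xs : ∀ i, X i, ∀ i : ι, ∀ y : X i,
      u i (Function.update xs i y) ≤ u i xs := by
  classical
  let P := ∀ i, X i
  let r : P → P → Prop := fun a b => ∃ i y, b = Function.update a i y ∧ u i a < u i b
  -- chains
  have chain : ∀ a b : P, Relation.TransGen r a b → ∃ k, 0 < k ∧ ∃ x : Fin (k+1) → P,
      x 0 = a ∧ x (Fin.last k) = b ∧ ∀ l : Fin k, r (x l.castSucc) (x l.succ) := by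
    intro a b h
    induction h with
    | single hab =>
        refine ⟨1, one_pos, ![a, _], rfl, rfl, ?_⟩
        intro l
        fin_cases l
        simpa using hab
    | @tail b c hbc hcd ih =>
        obtain ⟨k, hk, x, hx0, hxl, hstep⟩ := ih
        refine ⟨k + 1, Nat.succ_pos _, Fin.snoc x c, ?_, by simp, ?_⟩
        · rw [show (0 : Fin (k+2)) = (0 : Fin (k+1)).castSucc from rfl,
            Fin.snoc_castSucc]
          exact hx0
        · intro l
          refine Fin.lastCases ?_ ?_ l
          · simpa [Fin.succ_last, Fin.snoc_castSucc, hxl] using hcd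
          · intro i
            have h2 : ((i.castSucc : Fin (k+1)).succ : Fin (k+2)) = i.succ.castSucc := by
              ext; simp
            simpa only [h2, Fin.snoc_castSucc] using hstep i
  have irrefl : ∀ a : P, ¬ Relation.TransGen r a a := by
    intro a ha
    obtain ⟨k, hk, x, hx0, hxl, hstep⟩ := chain a a ha
    apply hnocycle
    refine ⟨k, hk, x, fun l => (hstep l).choose, by rw [hx0, hxl], ?_, ?_⟩
    · intro l m hm
      obtain ⟨y, hy, _⟩ := (hstep l).choose_spec
      rw [hy, Function.update_of_ne hm]
    · intro l
      obtain ⟨y, hy, hlt⟩ := (hstep l).choose_spec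
      exact hlt
  let s : P → P → Prop := fun a b => Relation.TransGen r b a
  haveI : IsTrans P s := ⟨fun a b c h1 h2 => h2.trans h1⟩
  haveI : IsIrrefl P s := ⟨irrefl⟩
  have wf := Finite.wellFounded_of_trans_of_irrefl s
  obtain ⟨xs, -, hmin⟩ := wf.has_min Set.univ ⟨Classical.arbitrary P, trivial⟩
  refine ⟨xs, fun i y => ?_⟩
  by_contra hlt
  push_neg at hlt
  exact hmin (Function.update xs i y) trivial
    (Relation.TransGen.single ⟨i, y, rfl, hlt⟩)
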